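/- Let A be a symmetric invertible m×m real matrix, x ∈ ℝᵐ, and let I¹ denote the m×m matrix with (I¹)ᵢⱼ = 1 if i = j = 1 and 0 otherwise. Let A_x denote the matrix A with its first row replaced by xᵀ. Then for p in any interval containing 0 on which A + pI¹ is invertible, d/dp [ xᵀ(A + pI¹)⁻¹x ] = − det(A_x)² / det(A + pI¹)². -/

import Mathlib

open Matrix

attribute [local instance] Matrix.linftyOpNormedRing Matrix.linftyOpNormedAlgebra
  Matrix.linftyOpNormedAddCommGroup

/-- For a symmetric invertible `m × m` real matrix `A`, a vector `x`, and
`I¹ = stdBasisMatrix 0 0 1`, whenever `A + p • I¹` is invertible we have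
`d/dp [xᵀ (A + p I¹)⁻¹ x] = - det(A_x)² / det(A + p I¹)²`, where `A_x` is `A` with its first
row replaced by `x`. -/
theorem deriv_quadratic_form_inverse
    (m : ℕ) (A : Matrix (Fin (m + 1)) (Fin (m + 1)) ℝ) (x : Fin (m + 1) → ℝ)
    (hA : A.IsSymm) (hAinv : IsUnit A.det)
    (p : ℝ) (hp : IsUnit (A + p • single (0 : Fin (m + 1)) 0 (1:ℝ)).det) :
    HasDerivAt
      (fun q : ℝ => x ⬝ᵥ ((A + q • single (0 : Fin (m + 1)) 0 (1:ℝ))⁻¹ *ᵥ x))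
      (-(A.updateRow 0 x).det ^ 2
        / (A + p • single (0 : Fin (m + 1)) 0 (1:ℝ)).det ^ 2) p := by
  set E : Matrix (Fin (m + 1)) (Fin (m + 1)) ℝ := single (0 : Fin (m + 1)) 0 (1:ℝ)
    with hE
  set B : ℝ → Matrix (Fin (m + 1)) (Fin (m + 1)) ℝ := fun q => A + q • E with hBdef
  have hBp : IsUnit (B p) := (Matrix.isUnit_iff_isUnit_det _).mpr hp
  -- B p is symmetric
  have hEsymm : Eᵀ = E := by
    ext i j
    simp [hE, single, and_comm]
  have hBsymm : (B p)ᵀ = B p := by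
    simp [hBdef, transpose_add, transpose_smul, hEsymm, hA.eq]
  -- derivative of B
  have hderivB : HasDerivAt B E p := by
    have h1 : HasDerivAt (fun q : ℝ => q • E) ((1:ℝ) • E) p :=
      (hasDerivAt_id p).smul_const E
    have h2 := h1.const_add A; rw [one_smul] at h2; exact h2
  -- derivative of the inverse
  have hunit : (hBp.unit : Matrix (Fin (m + 1)) (Fin (m + 1)) ℝ) = B p := hBp.unit_spec
  have hginv : HasDerivAt (fun q => Ring.inverse (B q)) (-((B p)⁻¹ * E * (B p)⁻¹)) p := by
    have h2 := (hasFDerivAt_ringInverse (𝕜 := ℝ) hBp.unit)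
    rw [hunit] at h2
    have h3 := h2.comp_hasDerivAt p hderivB
    simp [ContinuousLinearMap.mulLeftRight_apply, Matrix.coe_units_inv, hunit] at h3; exact h3
  -- compose with the linear map M ↦ x ⬝ᵥ M *ᵥ x
  let L : Matrix (Fin (m + 1)) (Fin (m + 1)) ℝ →ₗ[ℝ] ℝ :=
    { toFun := fun M => x ⬝ᵥ (M *ᵥ x)
      map_add' := fun M N => by simp [Matrix.add_mulVec, dotProduct_add]
      map_smul' := fun c M => by simp [Matrix.smul_mulVec] }
  have hfL : HasDerivAt (fun q => L (Ring.inverse (B q)))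
      (L (-((B p)⁻¹ * E * (B p)⁻¹))) p :=
    (LinearMap.toContinuousLinearMap L).hasFDerivAt.comp_hasDerivAt p hginv
  have hfun : (fun q : ℝ => x ⬝ᵥ ((B q)⁻¹ *ᵥ x)) = fun q => L (Ring.inverse (B q)) := by
    funext q
    simp [L, Matrix.nonsing_inv_eq_ringInverse]
  -- now compute the value
  set C := (B p)⁻¹ with hC
  have hCsymm : Cᵀ = C := by rw [hC, Matrix.transpose_nonsing_inv, hBsymm]
  set y := C *ᵥ x with hy
  have hval : L (-(C * E * C)) = -(y 0) ^ 2 := by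
    have hEC : E *ᵥ (C *ᵥ x) = Pi.single 0 (y 0) := by
      rw [hE, single_mulVec]
      ext i
      rcases eq_or_ne i 0 with rfl | h
      · simp [hy]
      · simp [h, Function.update_of_ne h, Pi.single_eq_of_ne h]
    have hsum : x ⬝ᵥ (fun i => C i 0 * y 0) = y 0 * y 0 := by
      have : ∀ i, C i 0 = C 0 i := fun i => by
        simpa using congrFun (congrFun hCsymm 0) i
      simp only [dotProduct]
      calc (∑ i, x i * (C i 0 * y 0)) = (∑ i, C 0 i * x i) * y 0 := by
            rw [Finset.sum_mul]; exact Finset.sum_congr rfl fun i _ => by rw [this i]; ring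
        _ = y 0 * y 0 := by rw [hy]; simp [mulVec, dotProduct]
    have : x ⬝ᵥ ((C * E * C) *ᵥ x) = y 0 * y 0 := by
      rw [← Matrix.mulVec_mulVec, ← Matrix.mulVec_mulVec, hEC, Matrix.mulVec_single]
      exact hsum
    simp only [L, LinearMap.coe_mk, AddHom.coe_mk, Matrix.neg_mulVec, dotProduct_neg, this]
    ring
  -- Cramer's rule
  have hcramer : (B p).det * y 0 = (A.updateRow 0 x).det := by
    have h := Matrix.det_smul_inv_mulVec_eq_cramer (B p) x hp
    have h0 := congrFun h 0
    rw [Matrix.cramer_apply] at h0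
    have hupd : (B p).updateCol 0 x = ((B p).updateRow 0 x)ᵀ := by
      rw [← Matrix.updateCol_transpose, hBsymm]
    have hrow : (B p).updateRow 0 x = A.updateRow 0 x := by
      ext i j
      rcases eq_or_ne i 0 with rfl | h'
      · simp
      · simp [Matrix.updateRow_ne h', hBdef, hE, single, h', Ne.symm h']
    have : (B p).det * y 0 = ((B p).updateCol 0 x).det := by
      simpa [hy, hC] using h0
    rw [this, hupd, Matrix.det_transpose, hrow]
  have hdetne : (B p).det ≠ 0 := hp.ne_zero
  have hy0 : y 0 = (A.updateRow 0 x).det / (B p).det := by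
    field_simp at hcramer ⊢
    linarith [hcramer]
  have hvalue : L (-(C * E * C)) =
      -(A.updateRow 0 x).det ^ 2 / (B p).det ^ 2 := by
    rw [hval, hy0]
    field_simp
  rw [hfun, ← hvalue]
  exact hfL
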